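/- Under the no-crossing hypothesis, for every unit i ∈ N, every block index k ∈ {1,…,K} and every period t ∈ T_k, the available stock computed within block k equals the available stock of the concatenated solution: S_i^t(k) + R_i^t(k) − D_i^{t−1}(k) = S_i^t + R_i^t − D_i^{t−1}, where the right-hand derived quantities are computed from the concatenated solution on T with the original initial stock s⁰_i. -/

import Mathlib

open Finset

/-- Accumulated stock of unit `i` up to period `t`: initial stock plus extra stock shared
to `i` by the groups it belongs to at periods `t'` with `start ≤ t' ≤ t`. -/
def Sder {N P : Type} [Fintype P] [DecidableEq N]
    (Ngrp : P → Finset N) (s0 : N → ℤ) (s : N → P → ℕ → ℕ)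
    (start : ℕ) (i : N) (t : ℕ) : ℤ :=
  s0 i + ∑ p : P, (if i ∈ Ngrp p then ∑ t' ∈ Finset.Icc start t, (s i p t' : ℤ) else 0)

/-- Amount received by unit `i` until period `t`: shipments `x j i t'` sent at periods
`start ≤ t' ≤ t` that have arrived by `t`, i.e. with `t' + ℓ j i ≤ t`. -/
def Rder {N : Type} [Fintype N] [DecidableEq N]
    (W : Finset (N × N)) (ℓ : N → N → ℕ) (x : N → N → ℕ → ℕ)
    (start : ℕ) (i : N) (t : ℕ) : ℤ :=
  ∑ j ∈ Finset.univ.filter (fun j => (j, i) ∈ W),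
    ∑ t' ∈ (Finset.Icc start t).filter (fun t' => t' + ℓ j i ≤ t), (x j i t' : ℤ)

/-- Amount delivered by unit `i` until period `t` (zero when `t < start`). -/
def Dder {N : Type} [Fintype N] [DecidableEq N]
    (W : Finset (N × N)) (x : N → N → ℕ → ℕ)
    (start : ℕ) (i : N) (t : ℕ) : ℤ :=
  ∑ j ∈ Finset.univ.filter (fun j => (i, j) ∈ W),
    ∑ t' ∈ Finset.Icc start t, (x i j t' : ℤ)

/-- Under the no-crossing hypothesis, for every unit `i`, block `k` and
period `t ∈ T_k`, the available stock computed within block `k` (from the block initial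
stocks `s0b k`) equals the available stock of the concatenated solution computed on the
whole horizon from the original initial stock `s0`:
`S_i^t(k) + R_i^t(k) − D_i^{t−1}(k) = S_i^t + R_i^t − D_i^{t−1}`. -/
theorem block_available_stock_eq_global
    (N P : Type) [Fintype N] [DecidableEq N] [Fintype P]
    (W : Finset (N × N)) (Ngrp : P → Finset N) (q : ℕ)
    (s0 : N → ℤ) (ℓ : N → N → ℕ)
    -- breakpoints 1 = tb 0 < tb 1 < ⋯ < tb K = q + 1
    (K : ℕ) (hK : 1 ≤ K)
    (tb : ℕ → ℕ) (htb0 : tb 0 = 1) (htbK : tb K = q + 1)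
    (htbmono : ∀ k < K, tb k < tb (k + 1))
    -- block solutions
    (xb : ℕ → N → N → ℕ → ℕ) (sb : ℕ → N → P → ℕ → ℕ) (yb : ℕ → N → N → ℕ → ℕ)
    -- block initial stocks: s0b 1 = s0 and recursively the available stock at the end of block k
    (s0b : ℕ → N → ℤ)
    (hs0b1 : ∀ i, s0b 1 i = s0 i)
    (hs0brec : ∀ k, 1 ≤ k → k < K → ∀ i,
      s0b (k + 1) i =
        Sder Ngrp (s0b k) (sb k) (tb (k - 1)) i (tb k - 1)
          + Rder W ℓ (xb k) (tb (k - 1)) i (tb k - 1)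
          - Dder W (xb k) (tb (k - 1)) i (tb k - 1))
    -- no-crossing hypothesis: shipments sent in a block arrive within the block
    (hnocross : ∀ k, 1 ≤ k → k ≤ K → ∀ j i, (j, i) ∈ W →
      ∀ t' ∈ Finset.Ico (tb (k - 1)) (tb k), tb k ≤ t' + ℓ j i → xb k j i t' = 0)
    -- the concatenated solution: at each t ∈ T_k it takes the block-k values
    (xc : N → N → ℕ → ℕ) (sc : N → P → ℕ → ℕ) (yc : N → N → ℕ → ℕ)
    (hxc : ∀ k, 1 ≤ k → k ≤ K → ∀ t ∈ Finset.Ico (tb (k - 1)) (tb k),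
      ∀ i j, xc i j t = xb k i j t)
    (hsc : ∀ k, 1 ≤ k → k ≤ K → ∀ t ∈ Finset.Ico (tb (k - 1)) (tb k),
      ∀ (i : N) (p : P), sc i p t = sb k i p t)
    (hyc : ∀ k, 1 ≤ k → k ≤ K → ∀ t ∈ Finset.Ico (tb (k - 1)) (tb k),
      ∀ i j, yc i j t = yb k i j t) :
    ∀ i : N, ∀ k, 1 ≤ k → k ≤ K → ∀ t ∈ Finset.Ico (tb (k - 1)) (tb k),
      Sder Ngrp (s0b k) (sb k) (tb (k - 1)) i t
        + Rder W ℓ (xb k) (tb (k - 1)) i t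
        - Dder W (xb k) (tb (k - 1)) i (t - 1)
      = Sder Ngrp s0 sc 1 i t + Rder W ℓ xc 1 i t - Dder W xc 1 i (t - 1) := by

  -- every breakpoint is at least 1
  have htb1 : ∀ k, k ≤ K → 1 ≤ tb k := by
    intro k hk
    induction k with
    | zero => omega
    | succ n ih =>
      have h1 := htbmono n (by omega)
      have h2 := ih (by omega)
      omega
  -- monotonicity of breakpoints
  have hmono : ∀ b, b ≤ K → ∀ a, a ≤ b → tb a ≤ tb b := by
    intro b
    induction b with
    | zero => intro _ a ha; interval_cases a; exact le_rfl
    | succ n ih =>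
      intro hb a ha
      rcases Nat.eq_or_lt_of_le ha with h | h
      · rw [h]
      · have h1 := ih (by omega) a (by omega)
        have h2 := htbmono n (by omega)
        omega
  -- every period before tb k lies in some earlier block
  have blockOf : ∀ k, k ≤ K → ∀ t', 1 ≤ t' → t' < tb k →
      ∃ k', 1 ≤ k' ∧ k' ≤ k ∧ tb (k' - 1) ≤ t' ∧ t' < tb k' := by
    intro k
    induction k with
    | zero => intro _ t' h1 h2; omega
    | succ n ih =>
      intro hk t' h1 h2
      by_cases h : t' < tb n
      · obtain ⟨k', hk1, hk2, hk3, hk4⟩ := ih (by omega) t' h1 h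
        exact ⟨k', hk1, by omega, hk3, hk4⟩
      · exact ⟨n + 1, by omega, le_rfl, by simpa using (by omega : tb n ≤ t'), h2⟩
  -- no-crossing for the concatenated solution
  have hzero : ∀ k, k ≤ K → ∀ j i', (j, i') ∈ W → ∀ t' t, 1 ≤ t' → t' < tb k →
      tb k ≤ t + 1 → t < t' + ℓ j i' → xc j i' t' = 0 := by
    intro k hk j i' hW t' t h1 h2 h3 h4
    obtain ⟨k', hk1, hk2, hk3, hk4⟩ := blockOf k hk t' h1 h2
    have hkK' : k' ≤ K := le_trans hk2 hk
    rw [hxc k' hk1 hkK' t' (Finset.mem_Ico.mpr ⟨hk3, hk4⟩) j i']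
    apply hnocross k' hk1 hkK' j i' hW t' (Finset.mem_Ico.mpr ⟨hk3, hk4⟩)
    have := hmono k hk k' hk2
    omega
  -- splitting a sum over Icc 1 t at m
  have hsplit : ∀ (f : ℕ → ℤ) (m t : ℕ), 1 ≤ m → m ≤ t + 1 →
      ∑ t' ∈ Finset.Icc 1 t, f t'
        = ∑ t' ∈ Finset.Icc 1 (m - 1), f t' + ∑ t' ∈ Finset.Icc m t, f t' := by
    intro f m t hm hmt
    have e1 : Finset.Icc 1 t = Finset.Ioc 0 t := by
      rw [← Finset.Icc_add_one_left_eq_Ioc]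
      rfl
    have e2 : Finset.Icc 1 (m - 1) = Finset.Ioc 0 (m - 1) := by
      rw [← Finset.Icc_add_one_left_eq_Ioc]
      rfl
    have e3 : Finset.Icc m t = Finset.Ioc (m - 1) t := by
      rw [← Finset.Icc_add_one_left_eq_Ioc]
      congr 1
      omega
    rw [e1, e2, e3]
    exact (Finset.sum_Ioc_consecutive f (Nat.zero_le _) (by omega)).symm
  -- key identity for S
  have keyS : ∀ k, 1 ≤ k → k ≤ K → ∀ t, tb (k - 1) ≤ t → t < tb k → ∀ i,
      Sder Ngrp s0 sc 1 i t
        = Sder Ngrp s0 sc 1 i (tb (k - 1) - 1)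
          + Sder Ngrp (s0b k) (sb k) (tb (k - 1)) i t - s0b k i := by
    intro k hk1 hkK t htm htk i
    have hm1 : 1 ≤ tb (k - 1) := htb1 _ (by omega)
    unfold Sder
    have hP : ∀ p ∈ (Finset.univ : Finset P),
        (if i ∈ Ngrp p then ∑ t' ∈ Finset.Icc 1 t, (sc i p t' : ℤ) else 0)
          = (if i ∈ Ngrp p then ∑ t' ∈ Finset.Icc 1 (tb (k - 1) - 1), (sc i p t' : ℤ) else 0)
            + (if i ∈ Ngrp p then ∑ t' ∈ Finset.Icc (tb (k - 1)) t, (sb k i p t' : ℤ) else 0) := by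
      intro p _
      split
      · rw [hsplit (fun t' => (sc i p t' : ℤ)) (tb (k - 1)) t hm1 (by omega)]
        congr 1
        apply Finset.sum_congr rfl
        intro t' ht'
        simp only [Finset.mem_Icc] at ht'
        rw [hsc k hk1 hkK t' (Finset.mem_Ico.mpr ⟨ht'.1, by omega⟩) i p]
      · simp
    rw [Finset.sum_congr rfl hP, Finset.sum_add_distrib]
    ring
  -- key identity for R
  have keyR : ∀ k, 1 ≤ k → k ≤ K → ∀ t, tb (k - 1) ≤ t → t < tb k → ∀ i,
      Rder W ℓ xc 1 i t
        = Rder W ℓ xc 1 i (tb (k - 1) - 1) + Rder W ℓ (xb k) (tb (k - 1)) i t := by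
    intro k hk1 hkK t htm htk i
    have hm1 : 1 ≤ tb (k - 1) := htb1 _ (by omega)
    unfold Rder
    rw [← Finset.sum_add_distrib]
    apply Finset.sum_congr rfl
    intro j hj
    simp only [Finset.mem_filter, Finset.mem_univ, true_and] at hj
    -- first: filtered sum on Icc 1 (m-1) equals unfiltered sum, at any t' ≥ m - 1
    have hfull : ∀ u, tb (k - 1) - 1 ≤ u →
        ∑ t' ∈ (Finset.Icc 1 (tb (k - 1) - 1)).filter (fun t' => t' + ℓ j i ≤ u),
            (xc j i t' : ℤ)
          = ∑ t' ∈ Finset.Icc 1 (tb (k - 1) - 1), (xc j i t' : ℤ) := by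
      intro u hu
      rw [Finset.sum_filter]
      apply Finset.sum_congr rfl
      intro t' ht'
      simp only [Finset.mem_Icc] at ht'
      split
      · rfl
      · rename_i hcond
        have h0 : xc j i t' = 0 :=
          hzero (k - 1) (by omega) j i hj t' u ht'.1 (by omega) (by omega) (by omega)
        simp [h0]
    rw [Finset.sum_filter, hsplit _ (tb (k - 1)) t hm1 (by omega), ← Finset.sum_filter,
      hfull t (by omega), hfull (tb (k - 1) - 1) le_rfl]
    congr 1
    rw [Finset.sum_filter]
    apply Finset.sum_congr rfl
    intro t' ht'
    simp only [Finset.mem_Icc] at ht'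
    rw [hxc k hk1 hkK t' (Finset.mem_Ico.mpr ⟨ht'.1, by omega⟩) j i]
  -- key identity for D
  have keyD : ∀ k, 1 ≤ k → k ≤ K → ∀ u, tb (k - 1) ≤ u + 1 → u < tb k → ∀ i,
      Dder W xc 1 i u
        = Dder W xc 1 i (tb (k - 1) - 1) + Dder W (xb k) (tb (k - 1)) i u := by
    intro k hk1 hkK u hum huk i
    have hm1 : 1 ≤ tb (k - 1) := htb1 _ (by omega)
    unfold Dder
    rw [← Finset.sum_add_distrib]
    apply Finset.sum_congr rfl
    intro j hj
    rw [hsplit _ (tb (k - 1)) u hm1 hum]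
    congr 1
    apply Finset.sum_congr rfl
    intro t' ht'
    simp only [Finset.mem_Icc] at ht'
    rw [hxc k hk1 hkK t' (Finset.mem_Ico.mpr ⟨ht'.1, by omega⟩) i j]
  -- the block initial stock equals the global available stock at the end of previous block
  have main : ∀ k, 1 ≤ k → k ≤ K → ∀ i,
      s0b k i = Sder Ngrp s0 sc 1 i (tb (k - 1) - 1)
        + Rder W ℓ xc 1 i (tb (k - 1) - 1) - Dder W xc 1 i (tb (k - 1) - 1) := by
    intro k
    induction k with
    | zero => omega
    | succ n ih =>
      intro h1 hK' i
      by_cases hn : n = 0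
      · subst hn
        simp [Sder, Rder, Dder, htb0, hs0b1,
          Finset.Icc_eq_empty_of_lt (by norm_num : (0 : ℕ) < 1)]
      · have hn1 : 1 ≤ n := by omega
        have hnK : n ≤ K := by omega
        have hmn : tb (n - 1) < tb n := by
          have h' := htbmono (n - 1) (by omega)
          rwa [show n - 1 + 1 = n from by omega] at h'
        have htn1 : 1 ≤ tb n := htb1 _ hnK
        have hrec := hs0brec n hn1 (by omega) i
        have hih := ih hn1 hnK i
        have hS := keyS n hn1 hnK (tb n - 1) (by omega) (by omega) i
        have hR := keyR n hn1 hnK (tb n - 1) (by omega) (by omega) i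
        have hD := keyD n hn1 hnK (tb n - 1) (by omega) (by omega) i
        simp only [Nat.add_sub_cancel]
        linarith
  intro i k hk1 hkK t ht
  rw [Finset.mem_Ico] at ht
  have hm := main k hk1 hkK i
  have hS := keyS k hk1 hkK t ht.1 ht.2 i
  have hR := keyR k hk1 hkK t ht.1 ht.2 i
  have hm1 : 1 ≤ tb (k - 1) := htb1 _ (by omega)
  have hD := keyD k hk1 hkK (t - 1) (by omega) (by omega) i
  linarith
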